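/- arXiv:1904.10112 — 3 statements merged into one kernel-verified Lean document; each statement's English description precedes it below -/
import Mathlib

section
/- Let ψ(x) = ⟨x, u⟩ + (1/(2γ))‖x - v‖² for γ > 0, and let x' = argmin_{x ∈ X} ψ(x) over a closed convex set X ⊆ ℝ^d. Then for every x ∈ X: ⟨v - x, u⟩ ≤ (γ/2)‖u‖² + (1/(2γ))‖x - v‖² - (1/(2γ))‖x - x'‖². -/
open scoped RealInnerProductSpace

/-- Minimizer inequality for `ψ(x) = ⟨x,u⟩ + (1/(2γ))‖x-v‖²` over a closed convex set `X`. -/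
theorem stmt2 {d : ℕ} (X : Set (EuclideanSpace ℝ (Fin d)))
    (hX : Convex ℝ X) (hXc : IsClosed X) (hXne : X.Nonempty)
    (u v : EuclideanSpace ℝ (Fin d)) (γ : ℝ) (hγ : 0 < γ)
    (x' : EuclideanSpace ℝ (Fin d)) (hx'X : x' ∈ X)
    (hmin : ∀ x ∈ X,
      ⟪x', u⟫ + 1 / (2 * γ) * ‖x' - v‖ ^ 2 ≤ ⟪x, u⟫ + 1 / (2 * γ) * ‖x - v‖ ^ 2) :
    ∀ x ∈ X,
      ⟪v - x, u⟫ ≤ γ / 2 * ‖u‖ ^ 2 + 1 / (2 * γ) * ‖x - v‖ ^ 2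
        - 1 / (2 * γ) * ‖x - x'‖ ^ 2 := by
  intro x hx
  set h : EuclideanSpace ℝ (Fin d) := x - x' with hh
  have hγ' : γ ≠ 0 := ne_of_gt hγ
  set a : ℝ := ⟪h, u⟫ with ha
  set b : ℝ := ⟪x' - v, h⟫ with hb
  set g : ℝ := a + (1 / γ) * b with hgdef
  have key : ∀ t : ℝ, 0 < t → t ≤ 1 → 0 ≤ t * g + t ^ 2 * (‖h‖ ^ 2 / (2 * γ)) := by
    intro t ht ht1
    have hmem : x' + t • h ∈ X := by
      have heq : x' + t • h = (1 - t) • x' + t • x := by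
        rw [hh]; module
      rw [heq]
      exact hX hx'X hx (by linarith) ht.le (by ring)
    have hm := hmin _ hmem
    have e1 : ⟪x' + t • h, u⟫ = ⟪x', u⟫ + t * a := by
      rw [ha, inner_add_left, real_inner_smul_left]
    have e2 : ‖x' + t • h - v‖ ^ 2 = ‖x' - v‖ ^ 2 + 2 * (t * b) + t ^ 2 * ‖h‖ ^ 2 := by
      have heq : x' + t • h - v = (x' - v) + t • h := by abel
      rw [heq, @norm_add_sq_real, real_inner_smul_right, ← hb, norm_smul,
        Real.norm_eq_abs, mul_pow, sq_abs]
    rw [e1, e2] at hm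
    have step : 0 ≤ t * a + 1 / (2 * γ) * (2 * (t * b) + t ^ 2 * ‖h‖ ^ 2) := by
      nlinarith [hm]
    have eqn : t * g + t ^ 2 * (‖h‖ ^ 2 / (2 * γ))
        = t * a + 1 / (2 * γ) * (2 * (t * b) + t ^ 2 * ‖h‖ ^ 2) := by
      rw [hgdef]; field_simp; ring
    linarith [eqn ▸ step]
  have hg : 0 ≤ g := by
    by_contra hgneg
    push_neg at hgneg
    set C : ℝ := ‖h‖ ^ 2 / (2 * γ) with hC
    have hC0 : 0 ≤ C := by positivity
    rcases eq_or_lt_of_le hC0 with hC0' | hCpos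
    · have := key 1 one_pos le_rfl
      nlinarith
    · have htpos : 0 < -g / (2 * C) := div_pos (by linarith) (by linarith)
      set t := min 1 (-g / (2 * C)) with hT
      have ht0 : 0 < t := lt_min one_pos htpos
      have ht1 : t ≤ 1 := min_le_left _ _
      have hk := key t ht0 ht1
      have ht2 : t ≤ -g / (2 * C) := min_le_right _ _
      rw [le_div_iff₀ (by linarith)] at ht2
      have h1 : t ^ 2 * C ≤ t * (-g / 2) := by nlinarith
      have h2 : t * g < 0 := mul_neg_of_pos_of_neg ht0 hgneg
      nlinarith
  -- final combination
  have e1 : ‖x - v‖ ^ 2 = ‖h‖ ^ 2 + 2 * b + ‖x' - v‖ ^ 2 := by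
    have heq : x - v = h + (x' - v) := by rw [hh]; abel
    rw [heq, @norm_add_sq_real, real_inner_comm, ← hb]
  have e2 : ⟪v - x, u⟫ = ⟪v - x', u⟫ - a := by
    rw [ha, ← inner_sub_left]
    congr 1
    rw [hh]
    abel
  have cs : ⟪v - x', u⟫ ≤ ‖x' - v‖ * ‖u‖ := by
    rw [← norm_sub_rev v x']
    exact real_inner_le_norm _ _
  have hg' : 0 ≤ γ * a + b := by
    have hmul := mul_nonneg hγ.le hg
    have : γ * g = γ * a + b := by rw [hgdef]; field_simp
    linarith [this ▸ hmul]
  have sq : 0 ≤ (‖x' - v‖ - γ * ‖u‖) ^ 2 := sq_nonneg _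
  rw [e1, e2]
  have expand : γ / 2 * ‖u‖ ^ 2 + 1 / (2 * γ) * (‖h‖ ^ 2 + 2 * b + ‖x' - v‖ ^ 2)
      - 1 / (2 * γ) * ‖h‖ ^ 2
      = (γ ^ 2 * ‖u‖ ^ 2 + 2 * b + ‖x' - v‖ ^ 2) / (2 * γ) := by
    field_simp; ring
  rw [expand, le_div_iff₀ (by linarith : (0:ℝ) < 2 * γ)]
  nlinarith [cs, sq, hg']
end

section
/- Let P: X → ℝ be convex with optimal set X*, optimal value P*, and suppose P satisfies the local error bound condition dist(x, X*) ≤ c (P(x) - P*)^θ on the ε-sublevel set S_ε = {x : P(x) - P* ≤ ε}, with c > 0, θ ∈ [0,1]. For any x₀ with P(x₀) - P* ≤ ε' (for some ε' ≥ ε), let x† be the closest point to x₀ in S_ε. Then ‖x† - x₀‖ ≤ (c ε'/ε^{1-θ}). -/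
open Metric

/-- Under the local error bound condition on the `ε`-sublevel set, the distance from an
`ε'`-optimal point `x₀` to its closest point `x†` in the `ε`-sublevel set is at most
`c ε'/ε^{1-θ}`. -/
theorem stmt11 {d : ℕ} (X : Set (EuclideanSpace ℝ (Fin d)))
    (P : EuclideanSpace ℝ (Fin d) → ℝ) (hPconv : ConvexOn ℝ X P)
    (Xstar : Set (EuclideanSpace ℝ (Fin d))) (hXstarne : Xstar.Nonempty)
    (Pstar : ℝ) (hXstar : ∀ z ∈ Xstar, z ∈ X ∧ P z = Pstar)
    (hPstar : ∀ x ∈ X, Pstar ≤ P x)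
    (c θ ε ε' : ℝ) (hc : 0 < c) (hθ : θ ∈ Set.Icc (0 : ℝ) 1)
    (hε : 0 < ε) (hε' : ε ≤ ε')
    (hLEB : ∀ x ∈ X, P x - Pstar ≤ ε → infDist x Xstar ≤ c * (P x - Pstar) ^ θ)
    (x₀ : EuclideanSpace ℝ (Fin d)) (hx₀ : x₀ ∈ X) (hx₀gap : P x₀ - Pstar ≤ ε')
    (xdag : EuclideanSpace ℝ (Fin d)) (hxdagmem : xdag ∈ X ∧ P xdag - Pstar ≤ ε)
    (hxdagclosest : ∀ z ∈ X, P z - Pstar ≤ ε → ‖xdag - x₀‖ ≤ ‖z - x₀‖)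
    (hxdaglevel : P xdag - Pstar = min ε (P x₀ - Pstar)) :
    ‖xdag - x₀‖ ≤ c * ε' / ε ^ (1 - θ) := by
  obtain ⟨hθ0, hθ1⟩ := hθ
  have hεpow : (0:ℝ) < ε ^ (1 - θ) := Real.rpow_pos_of_pos hε _
  have hε'0 : (0:ℝ) < ε' := lt_of_lt_of_le hε hε'
  have hRHS0 : (0:ℝ) ≤ c * ε' / ε ^ (1 - θ) := by positivity
  by_cases hg : P x₀ - Pstar ≤ ε
  · -- x₀ itself is in the sublevel set
    have h0 := hxdagclosest x₀ hx₀ hg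
    simp at h0
    rw [h0]
    simpa using hRHS0
  · push_neg at hg
    set g := P x₀ - Pstar with hgdef
    have hg0 : (0:ℝ) < g := lt_trans hε hg
    have hlevel : P xdag - Pstar = ε := by
      rw [hxdaglevel, min_eq_left (le_of_lt hg)]
    -- key claim: for every z ∈ Xstar, ε * D ≤ (g - ε) * dist xdag z
    set D := ‖xdag - x₀‖ with hDdef
    have key : ∀ z ∈ Xstar, ε * D ≤ (g - ε) * dist xdag z := by
      intro z hz
      obtain ⟨hzX, hzP⟩ := hXstar z hz
      set t : ℝ := ε / g with htdef
      have ht0 : 0 < t := div_pos hε hg0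
      have ht1 : t < 1 := (div_lt_one hg0).2 hg
      set y : EuclideanSpace ℝ (Fin d) := (1 - t) • z + t • x₀ with hydef
      have hyX : y ∈ X := hPconv.1 hzX hx₀ (by linarith) (le_of_lt ht0) (by ring)
      have hPy : P y ≤ (1 - t) * P z + t * P x₀ :=
        hPconv.2 hzX hx₀ (by linarith) (le_of_lt ht0) (by ring)
      have htg : t * g = ε := by
        rw [htdef]; exact div_mul_cancel₀ ε (ne_of_gt hg0)
      have hPygap : P y - Pstar ≤ ε := by
        have : (1 - t) * P z + t * P x₀ - Pstar = t * g := by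
          rw [hzP]; simp only [hgdef]; ring
        nlinarith [hPy]
      have hclose := hxdagclosest y hyX hPygap
      have hyx₀ : y - x₀ = (1 - t) • (z - x₀) := by
        simp only [hydef, smul_sub, sub_smul, one_smul]
        abel
      have hnorm : ‖y - x₀‖ = (1 - t) * ‖z - x₀‖ := by
        rw [hyx₀, norm_smul, Real.norm_eq_abs, abs_of_nonneg (by linarith)]
      have htri : ‖z - x₀‖ ≤ dist xdag z + D := by
        have h := norm_add_le (z - xdag) (xdag - x₀)
        have he : (z - xdag) + (xdag - x₀) = z - x₀ := by abel
        rw [he] at h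
        have hd : dist xdag z = ‖z - xdag‖ := by
          rw [dist_eq_norm, norm_sub_rev]
        rw [hd, hDdef]
        exact h
      have hD : D ≤ (1 - t) * (dist xdag z + D) := by
        calc D ≤ ‖y - x₀‖ := hclose
          _ = (1 - t) * ‖z - x₀‖ := hnorm
          _ ≤ (1 - t) * (dist xdag z + D) := by
              apply mul_le_mul_of_nonneg_left htri (by linarith)
      -- t * D ≤ (1 - t) * dist xdag z, multiply by g > 0
      have h1 : t * D ≤ (1 - t) * dist xdag z := by nlinarith
      have h2 : g * (t * D) ≤ g * ((1 - t) * dist xdag z) :=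
        mul_le_mul_of_nonneg_left h1 (le_of_lt hg0)
      have hgt : g * t = ε := by rw [mul_comm]; exact htg
      have hg1t : g * (1 - t) = g - ε := by
        rw [mul_sub, mul_one, hgt]
      calc ε * D = g * (t * D) := by rw [← mul_assoc, hgt]
        _ ≤ g * ((1 - t) * dist xdag z) := h2
        _ = (g - ε) * dist xdag z := by rw [← mul_assoc, hg1t]
    -- pass to infDist
    have hge : (0:ℝ) < g - ε := by linarith
    have hinf : ε * D / (g - ε) ≤ infDist xdag Xstar := by
      by_contra hlt
      push_neg at hlt
      obtain ⟨z, hz, hdz⟩ := (infDist_lt_iff hXstarne).1 hlt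
      have h5 := key z hz
      rw [lt_div_iff₀ hge] at hdz
      nlinarith
    have hLEBx : infDist xdag Xstar ≤ c * ε ^ θ := by
      have := hLEB xdag hxdagmem.1 hxdagmem.2
      rwa [hlevel] at this
    have hmain : ε * D ≤ (g - ε) * (c * ε ^ θ) := by
      have h3 : ε * D / (g - ε) ≤ c * ε ^ θ := le_trans hinf hLEBx
      calc ε * D = (ε * D / (g - ε)) * (g - ε) := by field_simp
        _ ≤ (c * ε ^ θ) * (g - ε) := by
            apply mul_le_mul_of_nonneg_right h3 (le_of_lt hge)
        _ = (g - ε) * (c * ε ^ θ) := by ring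
    -- conclude
    have hεθ : (0:ℝ) < ε ^ θ := Real.rpow_pos_of_pos hε _
    have hmain2 : ε * D ≤ ε' * (c * ε ^ θ) := by
      have hge' : g - ε ≤ ε' := by linarith
      have hcθ : (0:ℝ) ≤ c * ε ^ θ := by positivity
      nlinarith [mul_le_mul_of_nonneg_right hge' hcθ]
    -- RHS: c * ε' / ε ^ (1 - θ) = c * ε' * ε ^ θ / ε
    have hsplit : ε ^ (1 - θ) * ε ^ θ = ε := by
      rw [← Real.rpow_add hε]; simp
    rw [le_div_iff₀ hεpow]
    have h6 : D * ε ^ (1 - θ) * ε ^ θ ≤ c * ε' * ε ^ θ := by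
      calc D * ε ^ (1 - θ) * ε ^ θ = D * (ε ^ (1 - θ) * ε ^ θ) := by ring
        _ = D * ε := by rw [hsplit]
        _ = ε * D := by ring
        _ ≤ ε' * (c * ε ^ θ) := hmain2
        _ = c * ε' * ε ^ θ := by ring
    exact le_of_mul_le_mul_right h6 hεθ
end

section
/- Let h: ℝ^d → ℝ be p-uniformly convex with modulus λ > 0 and p ≥ 2 (h(x₁) ≥ h(x₂) + ⟨g, x₁-x₂⟩ + (λ/2)‖x₁-x₂‖^p for subgradients g). Then the convex conjugate h* is differentiable and ∇h* is (L, v)-Hölder continuous with v = 1/(p-1) and L = (1/λ)^v (up to a constant factor). -/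
open scoped RealInnerProductSpace

open InnerProductSpace

lemma exists_subgrad_zero {d : ℕ} (h : EuclideanSpace ℝ (Fin d) → ℝ)
    (hconv : ConvexOn ℝ Set.univ h) (hcont : Continuous h) :
    ∃ g : EuclideanSpace ℝ (Fin d), ∀ z, h 0 + ⟪g, z⟫ ≤ h z := by
  set S : Set (EuclideanSpace ℝ (Fin d) × ℝ) := {q | h q.1 < q.2} with hS
  have hSopen : IsOpen S := isOpen_lt (hcont.comp continuous_fst) continuous_snd
  have hSconv : Convex ℝ S := by
    intro x hx y hy a b ha hb hab
    simp only [hS, Set.mem_setOf_eq] at hx hy ⊢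
    have hle := hconv.2 (Set.mem_univ x.1) (Set.mem_univ y.1) ha hb hab
    simp only [smul_eq_mul] at hle
    rcases eq_or_lt_of_le ha with rfl | ha'
    · simp only [zero_add] at hab; subst hab
      simpa using hy
    · have h1 : a * h x.1 < a * x.2 := mul_lt_mul_of_pos_left hx ha'
      have h2 : b * h y.1 ≤ b * y.2 := mul_le_mul_of_nonneg_left hy.le hb
      calc h (a • x.1 + b • y.1) ≤ a * h x.1 + b * h y.1 := hle
        _ < a * x.2 + b * y.2 := by linarith
  have disj : ((0 : EuclideanSpace ℝ (Fin d)), h 0) ∉ S := by simp [hS]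
  obtain ⟨f, hf⟩ := geometric_hahn_banach_open_point hSconv hSopen disj
  set c : ℝ := f (0, 1) with hc
  have hcneg : c < 0 := by
    have h1 : f ((0 : EuclideanSpace ℝ (Fin d)), h 0 + 1) < f (0, h 0) := hf _ (by simp [hS])
    have h2 : ((0 : EuclideanSpace ℝ (Fin d)), h 0 + 1)
        = ((0 : EuclideanSpace ℝ (Fin d)), h 0) + (0, 1) := by simp
    rw [h2, map_add] at h1
    linarith
  have hcne : (0:ℝ) < -c := by linarith
  have hft : ∀ (x : EuclideanSpace ℝ (Fin d)) (t : ℝ), h x < t →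
      f (x, 0) + t * c < f (0, h 0) := by
    intro x t hxt
    have h2 : ((x : EuclideanSpace ℝ (Fin d)), t)
        = (x, 0) + t • ((0 : EuclideanSpace ℝ (Fin d)), (1:ℝ)) := by
      simp [Prod.ext_iff]
    have := hf (x, t) hxt
    rwa [h2, map_add, map_smul, smul_eq_mul] at this
  have key : ∀ x : EuclideanSpace ℝ (Fin d), f (x, 0) + h x * c ≤ f (0, h 0) := by
    intro x
    refine le_of_forall_pos_le_add ?_
    intro ε hε
    have hεt : (0:ℝ) < ε / (-c) := div_pos hε hcne
    have := hft x (h x + ε / (-c)) (by linarith)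
    have hmc : (ε / (-c)) * c = -ε := by
      rw [div_mul_eq_mul_div, div_eq_iff (by linarith : (-c) ≠ 0)]; ring
    nlinarith [this]
  have hf0 : f ((0 : EuclideanSpace ℝ (Fin d)), h 0) = h 0 * c := by
    have : ((0 : EuclideanSpace ℝ (Fin d)), h 0)
        = (h 0) • ((0 : EuclideanSpace ℝ (Fin d)), (1:ℝ)) := by simp [Prod.ext_iff]
    rw [this, map_smul, smul_eq_mul]
  set φ : EuclideanSpace ℝ (Fin d) →L[ℝ] ℝ :=
    (-c)⁻¹ • (f.comp (ContinuousLinearMap.inl ℝ (EuclideanSpace ℝ (Fin d)) ℝ)) with hφ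
  refine ⟨(InnerProductSpace.toDual ℝ (EuclideanSpace ℝ (Fin d))).symm φ, fun z => ?_⟩
  rw [InnerProductSpace.toDual_symm_apply]
  have hz := key z
  rw [hf0] at hz
  have hφz : φ z = (-c)⁻¹ * f (z, 0) := by simp [hφ]
  rw [hφz]
  have h2 : (-c)⁻¹ * f (z, 0) ≤ h z - h 0 := by
    rw [inv_mul_le_iff₀ hcne]; nlinarith
  linarith

/-- If `h` is `p`-uniformly convex with modulus `λ > 0` and `p ≥ 2`, then its convex
conjugate `h*` is differentiable with `(L, v)`-Hölder continuous gradient, where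
`v = 1/(p-1)` and `L = (1/λ)^v`, up to a constant factor. -/
theorem stmt16 {d : ℕ} (h : EuclideanSpace ℝ (Fin d) → ℝ) (lam p : ℝ)
    (hlam : 0 < lam) (hp : 2 ≤ p)
    (hconv : ConvexOn ℝ Set.univ h)
    (huc : ∀ x₁ x₂ g : EuclideanSpace ℝ (Fin d),
      (∀ z, h x₂ + ⟪g, z - x₂⟫ ≤ h z) →
      h x₂ + ⟪g, x₁ - x₂⟫ + lam / 2 * ‖x₁ - x₂‖ ^ p ≤ h x₁)
    (hstar : EuclideanSpace ℝ (Fin d) → ℝ)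
    (hstar_def : ∀ y, hstar y = ⨆ x, (⟪y, x⟫ - h x)) :
    ∃ (g : EuclideanSpace ℝ (Fin d) → EuclideanSpace ℝ (Fin d)) (Cf : ℝ), 0 < Cf ∧
      (∀ y, HasGradientAt hstar (g y) y) ∧
      ∀ y₁ y₂, ‖g y₁ - g y₂‖
        ≤ Cf * (1 / lam) ^ ((1 : ℝ) / (p - 1)) * ‖y₁ - y₂‖ ^ ((1 : ℝ) / (p - 1)) := by
  have hcont : Continuous h := by
    rw [← continuousOn_univ]
    exact hconv.continuousOn isOpen_univ
  obtain ⟨g₀, hg₀⟩ := exists_subgrad_zero h hconv hcont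
  have hbound : ∀ x, h 0 + ⟪g₀, x⟫ + lam / 2 * ‖x‖ ^ p ≤ h x := by
    intro x
    have := huc x 0 g₀ (fun z => by simpa using hg₀ z)
    simpa using this
  -- existence of maximizers
  have hexmax : ∀ y : EuclideanSpace ℝ (Fin d), ∃ x, ∀ z, ⟪y, z⟫ - h z ≤ ⟪y, x⟫ - h x := by
    intro y
    have hfyc : Continuous fun z : EuclideanSpace ℝ (Fin d) => ⟪y, z⟫ - h z :=
      (continuous_const.inner continuous_id).sub hcont
    set R : ℝ := max 1 (2 * (‖y - g₀‖ + 1) / lam) with hR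
    have hR1 : (1:ℝ) ≤ R := le_max_left _ _
    have hR0 : (0:ℝ) ≤ R := by linarith
    obtain ⟨x, hxball, hxmax⟩ := (isCompact_closedBall (0 : EuclideanSpace ℝ (Fin d)) R).exists_isMaxOn
      ⟨0, Metric.mem_closedBall_self hR0⟩ hfyc.continuousOn
    refine ⟨x, fun z => ?_⟩
    by_cases hz : z ∈ Metric.closedBall (0 : EuclideanSpace ℝ (Fin d)) R
    · exact hxmax hz
    · have hzR : R < ‖z‖ := by
        simpa [Metric.mem_closedBall, dist_zero_right, not_le] using hz
      have h1z : (1:ℝ) ≤ ‖z‖ := le_trans hR1 hzR.le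
      have hb := hbound z
      have hiz : ⟪y - g₀, z⟫ ≤ ‖y - g₀‖ * ‖z‖ := real_inner_le_norm _ _
      have hisub : ⟪y - g₀, z⟫ = ⟪y, z⟫ - ⟪g₀, z⟫ := inner_sub_left _ _ _
      have hzp : ‖z‖ * ‖z‖ ≤ ‖z‖ ^ p := by
        have h3 : ‖z‖ * ‖z‖ = ‖z‖ ^ (2:ℝ) := by
          rw [show (2:ℝ) = ((2:ℕ):ℝ) by norm_num, Real.rpow_natCast]; ring
        rw [h3]
        exact Real.rpow_le_rpow_of_exponent_le h1z hp
      have hRlam : 2 * (‖y - g₀‖ + 1) / lam < ‖z‖ := lt_of_le_of_lt (le_max_right _ _) hzR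
      have hlam2 : ‖y - g₀‖ + 1 < lam / 2 * ‖z‖ := by
        rw [div_lt_iff₀ hlam] at hRlam; nlinarith
      -- f z < f 0 ≤ f x
      have hfz : ⟪y, z⟫ - h z < ⟪y, (0:EuclideanSpace ℝ (Fin d))⟫ - h 0 := by
        have hn : (0:ℝ) < ‖z‖ := by linarith
        have : lam / 2 * (‖z‖ * ‖z‖) ≤ lam / 2 * ‖z‖ ^ p :=
          mul_le_mul_of_nonneg_left hzp (by linarith)
        simp only [inner_zero_right]
        nlinarith
      have hf0 : ⟪y, (0:EuclideanSpace ℝ (Fin d))⟫ - h 0 ≤ ⟪y, x⟫ - h x :=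
        hxmax (Metric.mem_closedBall_self hR0)
      linarith
  choose X hX using hexmax
  -- hstar equals the attained value
  have hval : ∀ y, hstar y = ⟪y, X y⟫ - h (X y) := by
    intro y
    rw [hstar_def]
    have hbdd : BddAbove (Set.range fun x => ⟪y, x⟫ - h x) :=
      ⟨⟪y, X y⟫ - h (X y), by rintro r ⟨x, rfl⟩; exact hX y x⟩
    exact le_antisymm (ciSup_le (hX y)) (le_ciSup hbdd (X y))
  -- y is a subgradient at X y
  have hsub : ∀ y z, h (X y) + ⟪y, z - X y⟫ ≤ h z := by
    intro y z
    have := hX y z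
    rw [inner_sub_right]
    linarith
  -- Hölder continuity of X
  have hp1 : (0:ℝ) < p - 1 := by linarith
  have hvpos : (0:ℝ) < 1 / (p - 1) := by positivity
  have hHolder : ∀ y₁ y₂, ‖X y₁ - X y₂‖
      ≤ (1 / lam) ^ ((1:ℝ) / (p - 1)) * ‖y₁ - y₂‖ ^ ((1:ℝ) / (p - 1)) := by
    intro y₁ y₂
    have A := huc (X y₁) (X y₂) y₂ (hsub y₂)
    have B := huc (X y₂) (X y₁) y₁ (hsub y₁)
    rw [norm_sub_rev, show X y₂ - X y₁ = -(X y₁ - X y₂) from (neg_sub _ _).symm,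
      inner_neg_right] at B
    have hkey : lam * ‖X y₁ - X y₂‖ ^ p ≤ ‖y₁ - y₂‖ * ‖X y₁ - X y₂‖ := by
      have hin : ⟪y₁ - y₂, X y₁ - X y₂⟫ ≤ ‖y₁ - y₂‖ * ‖X y₁ - X y₂‖ := real_inner_le_norm _ _
      rw [inner_sub_left] at hin
      linarith
    set D := ‖X y₁ - X y₂‖ with hD
    rcases eq_or_lt_of_le (norm_nonneg (X y₁ - X y₂)) with hD0 | hD0
    · rw [hD, ← hD0]; positivity
    · have hDne : D ≠ 0 := by rw [hD]; exact hD0.ne'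
      have hDnn : (0:ℝ) ≤ D := by rw [hD]; positivity
      have hDp : D ^ p = D ^ (p - 1) * D := by
        have h0 := Real.rpow_add_one hDne (p - 1)
        have hpe : p - 1 + 1 = p := by ring
        rw [hpe] at h0
        exact h0
      have h1 : lam * D ^ (p - 1) ≤ ‖y₁ - y₂‖ := by
        have := hkey
        rw [hDp] at this
        nlinarith
      have h2 : D ^ (p - 1) ≤ ‖y₁ - y₂‖ / lam := by
        rw [le_div_iff₀ hlam]; linarith
      have h3 : (D ^ (p - 1)) ^ ((1:ℝ) / (p - 1)) = D := by
        rw [← Real.rpow_mul hDnn, mul_one_div, div_self hp1.ne', Real.rpow_one]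
      calc D = (D ^ (p - 1)) ^ ((1:ℝ) / (p - 1)) := h3.symm
        _ ≤ (‖y₁ - y₂‖ / lam) ^ ((1:ℝ) / (p - 1)) :=
            Real.rpow_le_rpow (Real.rpow_nonneg hDnn _) h2 hvpos.le
        _ = (1 / lam) ^ ((1:ℝ) / (p - 1)) * ‖y₁ - y₂‖ ^ ((1:ℝ) / (p - 1)) := by
            rw [show ‖y₁ - y₂‖ / lam = (1 / lam) * ‖y₁ - y₂‖ by ring,
              Real.mul_rpow (by positivity) (norm_nonneg _)]
  -- gradient
  have hgrad : ∀ y, HasGradientAt hstar (X y) y := by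
    intro y
    have lower : ∀ z, hstar y + ⟪X y, z - y⟫ ≤ hstar z := by
      intro z
      have h1 : ⟪z, X y⟫ - h (X y) ≤ hstar z := by rw [hval z]; exact hX z (X y)
      have e1 : ⟪X y, z - y⟫ = ⟪z, X y⟫ - ⟪y, X y⟫ := by
        rw [inner_sub_right, real_inner_comm (X y) z, real_inner_comm (X y) y]
      rw [hval y, e1]; linarith
    have upper : ∀ z, hstar z ≤ hstar y + ⟪X y, z - y⟫
        + ‖z - y‖ * ((1 / lam) ^ ((1:ℝ) / (p - 1)) * ‖z - y‖ ^ ((1:ℝ) / (p - 1))) := by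
      intro z
      have h1 : ⟪y, X z⟫ - h (X z) ≤ hstar y := by rw [hval y]; exact hX y (X z)
      have h2 : hstar z = ⟪z, X z⟫ - h (X z) := hval z
      have e2 : ⟪z - y, X z⟫ = ⟪z, X z⟫ - ⟪y, X z⟫ := inner_sub_left _ _ _
      have e3 : ⟪z - y, X z - X y⟫ = ⟪z - y, X z⟫ - ⟪z - y, X y⟫ := inner_sub_right _ _ _
      have e4 : ⟪X y, z - y⟫ = ⟪z - y, X y⟫ := real_inner_comm _ _
      have h4 : ⟪z - y, X z - X y⟫ ≤ ‖z - y‖ * ‖X z - X y‖ := real_inner_le_norm _ _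
      have h5 : ‖X z - X y‖ ≤ (1 / lam) ^ ((1:ℝ) / (p - 1)) * ‖z - y‖ ^ ((1:ℝ) / (p - 1)) :=
        hHolder z y
      have h6 : ‖z - y‖ * ‖X z - X y‖
          ≤ ‖z - y‖ * ((1 / lam) ^ ((1:ℝ) / (p - 1)) * ‖z - y‖ ^ ((1:ℝ) / (p - 1))) :=
        mul_le_mul_of_nonneg_left h5 (norm_nonneg _)
      linarith
    rw [hasGradientAt_iff_hasFDerivAt, hasFDerivAt_iff_isLittleO_nhds_zero,
      Asymptotics.isLittleO_iff]
    intro c hc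
    have t1 : Filter.Tendsto (fun w : EuclideanSpace ℝ (Fin d) => ‖w‖)
        (nhds 0) (nhds 0) := by
      simpa using continuous_norm.tendsto (0 : EuclideanSpace ℝ (Fin d))
    have t2 : Filter.Tendsto
        (fun w : EuclideanSpace ℝ (Fin d) =>
          (1 / lam) ^ ((1:ℝ) / (p - 1)) * ‖w‖ ^ ((1:ℝ) / (p - 1))) (nhds 0) (nhds 0) := by
      have tr : Filter.Tendsto (fun t : ℝ => t ^ ((1:ℝ) / (p - 1))) (nhds 0) (nhds 0) := by
        have := (Real.continuousAt_rpow_const 0 ((1:ℝ) / (p - 1)) (Or.inr hvpos.le)).tendsto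
        rwa [Real.zero_rpow hvpos.ne'] at this
      have := (tr.comp t1).const_mul ((1 / lam) ^ ((1:ℝ) / (p - 1)))
      simpa using this
    have hev : ∀ᶠ w in nhds (0 : EuclideanSpace ℝ (Fin d)),
        (1 / lam) ^ ((1:ℝ) / (p - 1)) * ‖w‖ ^ ((1:ℝ) / (p - 1)) < c :=
      t2.eventually_lt_const hc
    filter_upwards [hev] with w hw
    rw [toDual_apply_apply]
    have hl := lower (y + w)
    have hu := upper (y + w)
    rw [add_sub_cancel_left] at hl hu
    have hnn : 0 ≤ hstar (y + w) - hstar y - ⟪X y, w⟫ := by linarith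
    rw [Real.norm_of_nonneg hnn]
    have h7 : ‖w‖ * ((1 / lam) ^ ((1:ℝ) / (p - 1)) * ‖w‖ ^ ((1:ℝ) / (p - 1)))
        ≤ ‖w‖ * c := mul_le_mul_of_nonneg_left hw.le (norm_nonneg _)
    calc hstar (y + w) - hstar y - ⟪X y, w⟫
        ≤ ‖w‖ * ((1 / lam) ^ ((1:ℝ) / (p - 1)) * ‖w‖ ^ ((1:ℝ) / (p - 1))) := by linarith
      _ ≤ ‖w‖ * c := h7
      _ = c * ‖w‖ := mul_comm _ _
  exact ⟨X, 1, one_pos, hgrad, fun y₁ y₂ => by simpa using hHolder y₁ y₂⟩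
end
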